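/- For the 5-dimensional embedded-tournament replicator system ẋ₁ = x₁(x₃−x₂−x₄+x₅), ẋ₂ = x₂(x₁−x₃−x₄+x₅), ẋ₃ = x₃(x₂−x₁−x₄+x₅), ẋ₄ = x₄(x₁+x₂+x₃−x₅), ẋ₅ = x₅(x₄−x₁−x₂−x₃), the quantity C₃ = (x₁+x₂+x₃)x₄x₅ is conserved along solutions. -/

import Mathlib

/-- For the 5-dimensional embedded-tournament replicator system,
`C₃ = (x₁+x₂+x₃)x₄x₅` is conserved. -/
theorem embedded5_C3_conserved (x₁ x₂ x₃ x₄ x₅ : ℝ → ℝ)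
    (h₁ : ∀ t, HasDerivAt x₁ (x₁ t * (x₃ t - x₂ t - x₄ t + x₅ t)) t)
    (h₂ : ∀ t, HasDerivAt x₂ (x₂ t * (x₁ t - x₃ t - x₄ t + x₅ t)) t)
    (h₃ : ∀ t, HasDerivAt x₃ (x₃ t * (x₂ t - x₁ t - x₄ t + x₅ t)) t)
    (h₄ : ∀ t, HasDerivAt x₄ (x₄ t * (x₁ t + x₂ t + x₃ t - x₅ t)) t)
    (h₅ : ∀ t, HasDerivAt x₅ (x₅ t * (x₄ t - x₁ t - x₂ t - x₃ t)) t) :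
    ∀ t, HasDerivAt (fun s => (x₁ s + x₂ s + x₃ s) * x₄ s * x₅ s) 0 t := by
  intro t
  have h := ((((h₁ t).add (h₂ t)).add (h₃ t)).mul (h₄ t)).mul (h₅ t)
  refine h.congr_deriv ?_
  simp only [Pi.add_apply, Pi.mul_apply]
  ring
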